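/- Let G be a nondismantlable digraph with no loops and n ≥ 1. If the two-sided extension G^⊥⊤ is congruence (n+2)-permutable, then G is congruence n-permutable. -/
import Mathlib


/-- A digraph is congruence `n`-permutable if it has a chain of ternary polymorphisms
witnessing `n`-permutability. -/
def IsNPermutable {V : Type*} (E : V → V → Prop) (n : ℕ) : Prop :=
  ∃ p : Fin (n + 1) → V → V → V → V,
    (∀ i, ∀ a₁ a₂ a₃ b₁ b₂ b₃, E a₁ b₁ → E a₂ b₂ → E a₃ b₃ →
      E (p i a₁ a₂ a₃) (p i b₁ b₂ b₃)) ∧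
    (∀ x y z, p 0 x y z = x) ∧
    (∀ i : Fin n, ∀ x y, p i.castSucc x x y = p i.succ x y y) ∧
    (∀ x y z, p (Fin.last n) x y z = z)

/-- If `G` is nondismantlable, has no loops, and its two-sided extension `G^⊥⊤`
(modelled on `V ⊕ Bool` with `Sum.inr false = ⊥`, `Sum.inr true = ⊤`) is
congruence `(n+2)`-permutable, then `G` is congruence `n`-permutable. -/
theorem stmt_13 {V : Type*} (E : V → V → Prop) (n : ℕ) (hn : 1 ≤ n)
    (hloop : ∀ v, ¬ E v v)
    (hnondis : ∀ v w : V, (∀ u, E v u → E w u) → (∀ u, E u v → E u w) → v = w)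
    (E₂ : V ⊕ Bool → V ⊕ Bool → Prop)
    (hE₂ : ∀ x y : V ⊕ Bool, E₂ x y ↔
      ((∃ u v, x = Sum.inl u ∧ y = Sum.inl v ∧ E u v) ∨
       (x = Sum.inr false ∧ y ≠ Sum.inr false) ∨
       (y = Sum.inr true ∧ x ≠ Sum.inr true)))
    (h : IsNPermutable E₂ (n + 2)) :
    IsNPermutable E n := by
  obtain ⟨p, hpoly, hp0, hchain, hplast⟩ := h
  -- basic edge facts
  have eBotInl : ∀ v : V, E₂ (Sum.inr false) (Sum.inl v) := by simp [hE₂]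
  have eInlTop : ∀ v : V, E₂ (Sum.inl v) (Sum.inr true) := by simp [hE₂]
  have eBotTop : E₂ (Sum.inr false) (Sum.inr true) := by simp [hE₂]
  have eInl : ∀ u v : V, E u v → E₂ (Sum.inl u) (Sum.inl v) := by
    intro u v huv; rw [hE₂]; exact Or.inl ⟨u, v, rfl, rfl, huv⟩
  have eInl' : ∀ u v : V, E₂ (Sum.inl u) (Sum.inl v) → E u v := by
    intro u v huv; rw [hE₂] at huv
    rcases huv with ⟨a, b, ha, hb, hab⟩ | ⟨h1, _⟩ | ⟨h1, _⟩
    · cases ha; cases hb; exact hab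
    · exact absurd h1 (by simp)
    · exact absurd h1 (by simp)
  have noTopOut : ∀ y, ¬ E₂ (Sum.inr true) y := by simp [hE₂]
  have noBotIn : ∀ x, ¬ E₂ x (Sum.inr false) := by simp [hE₂]
  -- membership: p i on V³ lands in V
  have mem : ∀ (i : Fin (n + 3)) (a b c : V),
      ∃ v : V, p i (Sum.inl a) (Sum.inl b) (Sum.inl c) = Sum.inl v := by
    intro i a b c
    have hup := hpoly i (Sum.inl a) (Sum.inl b) (Sum.inl c)
      (Sum.inr true) (Sum.inr true) (Sum.inr true) (eInlTop a) (eInlTop b) (eInlTop c)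
    have hdown := hpoly i (Sum.inr false) (Sum.inr false) (Sum.inr false)
      (Sum.inl a) (Sum.inl b) (Sum.inl c) (eBotInl a) (eBotInl b) (eBotInl c)
    rcases hval : p i (Sum.inl a) (Sum.inl b) (Sum.inl c) with v | b'
    · exact ⟨v, rfl⟩
    · rcases b' with _ | _
      · rw [hval] at hdown; exact absurd hdown (noBotIn _)
      · rw [hval] at hup; exact absurd hup (noTopOut _)
  -- chain consequences at the ends
  have one_lt : (1 : ℕ) < n + 3 := by omega
  have hp1 : ∀ x y : V ⊕ Bool, p ⟨1, one_lt⟩ x y y = x := by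
    intro x y
    have := hchain 0 x y
    have h0c : (0 : Fin (n + 2)).castSucc = (0 : Fin (n + 3)) := rfl
    have h0s : (0 : Fin (n + 2)).succ = (⟨1, one_lt⟩ : Fin (n + 3)) := rfl
    rw [h0c, h0s, hp0] at this
    exact this.symm
  have nlt : n + 1 < n + 3 := by omega
  have hpN : ∀ x y : V ⊕ Bool, p ⟨n + 1, nlt⟩ x x y = y := by
    intro x y
    have := hchain ⟨n + 1, by omega⟩ x y
    have h0c : (⟨n + 1, by omega⟩ : Fin (n + 2)).castSucc = (⟨n + 1, nlt⟩ : Fin (n + 3)) := rfl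
    have h0s : (⟨n + 1, by omega⟩ : Fin (n + 2)).succ = Fin.last (n + 2) := rfl
    rw [h0c, h0s, hplast] at this
    exact this
  -- p₁ is the first projection on V³
  have proj1 : ∀ x y z : V,
      p ⟨1, one_lt⟩ (Sum.inl x) (Sum.inl y) (Sum.inl z) = Sum.inl x := by
    intro x y z
    obtain ⟨w, hw⟩ := mem ⟨1, one_lt⟩ x y z
    have hxw : x = w := by
      apply hnondis x w
      · intro u hu
        have := hpoly ⟨1, one_lt⟩ (Sum.inl x) (Sum.inl y) (Sum.inl z)
          (Sum.inl u) (Sum.inr true) (Sum.inr true)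
          (eInl _ _ hu) (eInlTop y) (eInlTop z)
        rw [hw, hp1 (Sum.inl u) (Sum.inr true)] at this
        exact eInl' _ _ this
      · intro u hu
        have := hpoly ⟨1, one_lt⟩ (Sum.inl u) (Sum.inr false) (Sum.inr false)
          (Sum.inl x) (Sum.inl y) (Sum.inl z)
          (eInl _ _ hu) (eBotInl y) (eBotInl z)
        rw [hw, hp1 (Sum.inl u) (Sum.inr false)] at this
        exact eInl' _ _ this
    rw [hw, hxw]
  -- p_{n+1} is the last projection on V³
  have projN : ∀ x y z : V,
      p ⟨n + 1, nlt⟩ (Sum.inl x) (Sum.inl y) (Sum.inl z) = Sum.inl z := by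
    intro x y z
    obtain ⟨w, hw⟩ := mem ⟨n + 1, nlt⟩ x y z
    have hzw : z = w := by
      apply hnondis z w
      · intro u hu
        have := hpoly ⟨n + 1, nlt⟩ (Sum.inl x) (Sum.inl y) (Sum.inl z)
          (Sum.inr true) (Sum.inr true) (Sum.inl u)
          (eInlTop x) (eInlTop y) (eInl _ _ hu)
        rw [hw, hpN (Sum.inr true) (Sum.inl u)] at this
        exact eInl' _ _ this
      · intro u hu
        have := hpoly ⟨n + 1, nlt⟩ (Sum.inr false) (Sum.inr false) (Sum.inl u)
          (Sum.inl x) (Sum.inl y) (Sum.inl z)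
          (eBotInl x) (eBotInl y) (eInl _ _ hu)
        rw [hw, hpN (Sum.inr false) (Sum.inl u)] at this
        exact eInl' _ _ this
    rw [hw, hzw]
  -- build the chain on V
  refine ⟨fun j x y z =>
    Sum.elim id (fun _ => x) (p ⟨j.val + 1, by omega⟩ (Sum.inl x) (Sum.inl y) (Sum.inl z)),
    ?_, ?_, ?_, ?_⟩
  · intro i a₁ a₂ a₃ b₁ b₂ b₃ h1 h2 h3
    obtain ⟨v, hv⟩ := mem ⟨i.val + 1, by omega⟩ a₁ a₂ a₃
    obtain ⟨w, hw⟩ := mem ⟨i.val + 1, by omega⟩ b₁ b₂ b₃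
    have := hpoly ⟨i.val + 1, by omega⟩ (Sum.inl a₁) (Sum.inl a₂) (Sum.inl a₃)
      (Sum.inl b₁) (Sum.inl b₂) (Sum.inl b₃) (eInl _ _ h1) (eInl _ _ h2) (eInl _ _ h3)
    dsimp only
    rw [hv, hw] at this ⊢
    exact eInl' _ _ this
  · intro x y z
    have h0 : ((0 : Fin (n + 1)).val : ℕ) = 0 := rfl
    simp only [h0, proj1 x y z]
    rfl
  · intro i x y
    have hcs : (i.castSucc.val : ℕ) = i.val := rfl
    have hsc : (i.succ.val : ℕ) = i.val + 1 := rfl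
    have heq : p ⟨i.castSucc.val + 1, by omega⟩ (Sum.inl x) (Sum.inl x) (Sum.inl y)
        = p ⟨i.succ.val + 1, by omega⟩ (Sum.inl x) (Sum.inl y) (Sum.inl y) := by
      have := hchain ⟨i.val + 1, by omega⟩ (Sum.inl x) (Sum.inl y)
      have e1 : (⟨i.val + 1, by omega⟩ : Fin (n + 2)).castSucc
          = (⟨i.castSucc.val + 1, by omega⟩ : Fin (n + 3)) := rfl
      have e2 : (⟨i.val + 1, by omega⟩ : Fin (n + 2)).succ
          = (⟨i.succ.val + 1, by omega⟩ : Fin (n + 3)) := by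
        apply Fin.ext; simp [hsc]
      rw [e1, e2] at this
      exact this
    obtain ⟨v, hv⟩ := mem ⟨i.castSucc.val + 1, by omega⟩ x x y
    obtain ⟨w, hw⟩ := mem ⟨i.succ.val + 1, by omega⟩ x y y
    dsimp only
    rw [hv, hw]
    rw [hv, hw] at heq
    simpa using heq
  · intro x y z
    have hl : ((Fin.last n).val : ℕ) = n := rfl
    simp only [hl, projN x y z]
    rfl
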